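/- Let P be an invertible linear map on a d-dimensional real vector space whose eigenvalues all have modulus strictly greater than 1, and suppose det(P) < 0. Then for every positive integer n, (-1)^{d+n} · det(I - Pⁿ) > 0. -/

import Mathlib

open Polynomial Matrix

lemma eval_charpoly' {R : Type*} [CommRing R] {m : Type*} [DecidableEq m] [Fintype m]
    (M : Matrix m m R) (x : R) : M.charpoly.eval x = (x • (1 : Matrix m m R) - M).det := by
  rw [Matrix.charpoly, ← Polynomial.coe_evalRingHom, RingHom.map_det]
  congr 1
  ext i j
  by_cases h : i = j <;>
    simp [h, Matrix.charmatrix_apply, Matrix.sub_apply, Matrix.smul_apply, Matrix.one_apply,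
      Matrix.diagonal_apply]

lemma no_root_aux {d : ℕ} (n : ℕ) (hn : 1 ≤ n) (M : Matrix (Fin d) (Fin d) ℝ)
    (hP : ∀ z : ℂ, (M.charpoly.map (algebraMap ℝ ℂ)).IsRoot z → 1 < ‖z‖)
    (s : ℝ) (hs0 : 0 ≤ s) (hs1 : s ≤ 1) : (M ^ n).charpoly.eval s ≠ 0 := by
  intro h
  set f : ℝ →+* ℂ := algebraMap ℝ ℂ
  set A : Matrix (Fin d) (Fin d) ℂ := M.map f with hA
  have hAn : A ^ n = (M ^ n).map f := by
    simpa using (f.mapMatrix.map_pow M n).symm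
  -- complexified: det ((s:ℂ) • 1 - A^n) = 0
  have hdet0 : ((s : ℂ) • (1 : Matrix (Fin d) (Fin d) ℂ) - A ^ n).det = 0 := by
    rw [← eval_charpoly', hAn, Matrix.charpoly_map]
    have : ((M ^ n).charpoly.map f).eval ((s : ℝ) : ℂ) = f ((M ^ n).charpoly.eval s) := by
      rw [Polynomial.eval_map]
      exact Polynomial.eval₂_hom f s
    simpa [h] using this
  -- factor X^n - C s over ℂ
  set q : ℂ[X] := X ^ n - C (s : ℂ) with hq
  have hmon : q.Monic := monic_X_pow_sub_C _ (by omega)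
  have hfac : q = (q.roots.map fun ω => X - C ω).prod :=
    Polynomial.Splits.eq_prod_roots_of_monic (IsAlgClosed.splits q) hmon
  have haeval : Polynomial.aeval A q = A ^ n - (s : ℂ) • 1 := by
    simp [hq, Algebra.algebraMap_eq_smul_one]
  have hdet0' : (Polynomial.aeval A q).det = 0 := by
    rw [haeval, ← neg_sub ((s : ℂ) • 1) (A ^ n), Matrix.det_neg, hdet0, mul_zero]
  set L : List ℂ[X] := (q.roots.map fun ω => X - C ω).toList with hL
  have hlist : (L.map fun r => (Polynomial.aeval A r).det).prod = 0 := by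
    have h1 : Polynomial.aeval A q = (L.map fun r => Polynomial.aeval A r).prod := by
      conv_lhs => rw [hfac, ← Multiset.prod_toList]
      exact map_list_prod (Polynomial.aeval A) _
    have h2 : (Polynomial.aeval A q).det =
        (L.map fun r => (Polynomial.aeval A r).det).prod := by
      rw [h1, ← Matrix.coe_detMonoidHom (n := Fin d) (R := ℂ), map_list_prod (Matrix.detMonoidHom (n := Fin d) (R := ℂ)), List.map_map]
      rfl
    rw [← h2, hdet0']
  obtain ⟨x, hx, hxdet⟩ := List.mem_map.mp (List.prod_eq_zero_iff.mp hlist)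
  obtain ⟨ω, hω, rfl⟩ := Multiset.mem_map.mp (Multiset.mem_toList.mp hx)
  have hxdet : (A - ω • 1).det = 0 := by
    rw [← hxdet]
    simp [Algebra.algebraMap_eq_smul_one]
  -- ω is a root of charpoly A, hence of modulus > 1
  have hωq : ω ^ n = (s : ℂ) := by
    have := Polynomial.isRoot_of_mem_roots hω
    simp only [hq, Polynomial.IsRoot, Polynomial.eval_sub, Polynomial.eval_pow,
      Polynomial.eval_X, Polynomial.eval_C] at this
    linear_combination this
  have hωroot : (M.charpoly.map f).IsRoot ω := by
    have h1 : (ω • (1 : Matrix (Fin d) (Fin d) ℂ) - A).det = 0 := by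
      rw [← neg_sub (A) (ω • 1), Matrix.det_neg, hxdet, mul_zero]
    have := eval_charpoly' A ω
    rw [h1, Matrix.charpoly_map] at this
    exact this
  have hω1 : 1 < ‖ω‖ := hP ω hωroot
  have : ‖ω‖ ^ n ≤ 1 := by
    rw [← norm_pow, hωq]
    simpa [Complex.norm_real, abs_of_nonneg hs0] using hs1
  have : (1:ℝ) < 1 := lt_of_lt_of_le (one_lt_pow₀ hω1 (by omega)) this
  exact lt_irrefl _ this

/-- If `P` is an invertible linear map on a `d`-dimensional real vector space all of whose
(complex) eigenvalues have modulus strictly greater than 1, and `det P < 0`, then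
`(-1)^(d+n) · det (I - Pⁿ) > 0` for every positive integer `n`. -/
theorem stmt_2 (E : Type*) [AddCommGroup E] [Module ℝ E] [FiniteDimensional ℝ E]
    (P : E →ₗ[ℝ] E) (hinv : Function.Bijective P)
    (hP : ∀ z : ℂ, ((LinearMap.charpoly P).map (algebraMap ℝ ℂ)).IsRoot z → 1 < ‖z‖)
    (hdet : LinearMap.det P < 0)
    (n : ℕ) (hn : 1 ≤ n) :
    0 < (-1 : ℝ) ^ (Module.finrank ℝ E + n) *
      LinearMap.det ((LinearMap.id : E →ₗ[ℝ] E) - P ^ n) := by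
  set d := Module.finrank ℝ E with hd
  let b : Module.Basis (Fin d) ℝ E := Module.finBasis ℝ E
  set M : Matrix (Fin d) (Fin d) ℝ := LinearMap.toMatrix b b P with hM
  have hchar : M.charpoly = P.charpoly := LinearMap.charpoly_toMatrix P b
  have hdetM : M.det = LinearMap.det P := LinearMap.det_toMatrix b P
  have hgoal : LinearMap.det ((LinearMap.id : E →ₗ[ℝ] E) - P ^ n) = (1 - M ^ n).det := by
    rw [← LinearMap.det_toMatrix b, map_sub, LinearMap.toMatrix_id, LinearMap.toMatrix_pow]
  set p : ℝ[X] := (M ^ n).charpoly with hp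
  have e0 : p.eval 0 = (-1 : ℝ) ^ d * M.det ^ n := by
    rw [hp, eval_charpoly', zero_smul, zero_sub, Matrix.det_neg, Matrix.det_pow]
    simp
  have e1 : p.eval 1 = (1 - M ^ n).det := by
    rw [hp, eval_charpoly', one_smul]
  set g : ℝ → ℝ := fun s => (-1 : ℝ) ^ (d + n) * p.eval s with hg
  have hg0 : 0 < g 0 := by
    have : g 0 = (-M.det) ^ n := by
      rw [hg]
      simp only [e0]
      have h2 : ((-1 : ℝ) ^ d) * ((-1 : ℝ) ^ d) = 1 := by
        rw [← pow_add, ← two_mul, pow_mul]; norm_num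
      calc (-1 : ℝ) ^ (d + n) * ((-1 : ℝ) ^ d * M.det ^ n)
          = ((-1 : ℝ) ^ d * (-1 : ℝ) ^ d) * ((-1 : ℝ) ^ n * M.det ^ n) := by
            rw [pow_add]; ring
        _ = (-M.det) ^ n := by rw [h2, one_mul, ← neg_pow]
    rw [this]
    exact pow_pos (by linarith [hdetM ▸ hdet]) n
  have hgz : ∀ s ∈ Set.Icc (0:ℝ) 1, g s ≠ 0 := by
    intro s hs
    have := no_root_aux n hn M (by rwa [hchar]) s hs.1 hs.2
    simp only [hg, mul_ne_zero_iff]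
    exact ⟨pow_ne_zero _ (by norm_num), this⟩
  have hgc : Continuous g := continuous_const.mul p.continuous
  have hg1 : 0 < g 1 := by
    by_contra hcon
    push_neg at hcon
    have hne : g 1 ≠ 0 := hgz 1 (by norm_num)
    have hlt : g 1 < 0 := lt_of_le_of_ne hcon hne
    have : (0 : ℝ) ∈ Set.Icc (g 1) (g 0) := ⟨le_of_lt hlt, le_of_lt hg0⟩
    obtain ⟨x, hx, hgx⟩ := intermediate_value_Icc' (by norm_num : (0:ℝ) ≤ 1)
      hgc.continuousOn this
    exact hgz x hx hgx
  rw [hgoal, ← e1]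
  exact hg1
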